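/- Let f ∈ L^∞(ℝⁿ) with f = 0 for |x| ≥ M, and let μ = γ₁ + iγ₂ with γ₁, γ₂ orthonormal in ℝⁿ. Let u = N_μ^{-1} f be the Cauchy-transform solution of μ·∇u = f. Then there is C = C(M) such that |u(x)| ≤ C ‖f‖_{L^∞} ⟨x_T⟩^{-1} χ_{B(0,M)}(x_⊥) for all x, where x_T is the orthogonal projection of x onto span{γ₁,γ₂}, x_⊥ = x − x_T, and ⟨y⟩ = (1+|y|²)^{1/2}. -/

import Mathlib

open MeasureTheory Complex
open Set Real


noncomputable def Ffun (R : ℝ) : ℝ × ℝ → ℝ :=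
  Set.indicator {y : ℝ × ℝ | ‖((y.1 : ℂ) + y.2 * I)‖ < R}
    (fun y => (‖((y.1 : ℂ) + y.2 * I)‖)⁻¹)

lemma Ffun_nonneg (R : ℝ) (y : ℝ × ℝ) : 0 ≤ Ffun R y := by
  unfold Ffun
  apply Set.indicator_nonneg
  intro y _
  positivity

lemma abs_symm_polar (p : ℝ × ℝ) :
    ‖(((polarCoord.symm p).1 : ℂ) + (polarCoord.symm p).2 * I)‖ = |p.1| := by
  simp only [polarCoord_symm_apply]
  rw [Complex.norm_add_mul_I]
  rw [show (p.1 * Real.cos p.2) ^ 2 + (p.1 * Real.sin p.2) ^ 2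
      = p.1 ^ 2 * ((Real.cos p.2) ^ 2 + (Real.sin p.2) ^ 2) by ring,
    Real.cos_sq_add_sin_sq, mul_one, Real.sqrt_sq_eq_abs]

lemma Ffun_measurable (R : ℝ) : Measurable (Ffun R) := by
  have habs : Measurable (fun y : ℝ × ℝ => ‖((y.1 : ℂ) + y.2 * I)‖) := by
    apply Continuous.measurable
    apply continuous_norm.comp
    fun_prop
  exact (habs.inv).indicator (measurableSet_lt habs measurable_const)

lemma symm_polar_continuous : Continuous (fun p : ℝ × ℝ => polarCoord.symm p) := by
  simp only [polarCoord_symm_apply]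
  fun_prop

lemma indic_box_integrable (R : ℝ) :
    Integrable (fun p : ℝ × ℝ =>
      Set.indicator (Set.Ioo (0:ℝ) R ×ˢ Set.Ioo (-π) π) (fun _ => (1:ℝ)) p) := by
  rw [integrable_indicator_iff (measurableSet_Ioo.prod measurableSet_Ioo)]
  refine integrableOn_const ?_
  rw [Measure.volume_eq_prod, Measure.prod_prod]
  exact (ENNReal.mul_lt_top measure_Ioo_lt_top measure_Ioo_lt_top).ne

lemma polar_bound (p : ℝ × ℝ) (hp : p ∈ polarCoord.target) (R : ℝ) :
    |p.1| • Ffun R (polarCoord.symm p) ≤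
      Set.indicator (Set.Ioo (0:ℝ) R ×ˢ Set.Ioo (-π) π) (fun _ => (1:ℝ)) p := by
  rw [polarCoord_target, Set.mem_prod] at hp
  obtain ⟨hp1, hp2⟩ := hp
  rw [Set.mem_Ioi] at hp1
  unfold Ffun
  rw [Set.indicator_apply]
  by_cases h : ‖(((polarCoord.symm p).1 : ℂ) + (polarCoord.symm p).2 * I)‖ < R
  · rw [if_pos (show (polarCoord.symm p : ℝ × ℝ) ∈
        {y : ℝ × ℝ | ‖((y.1 : ℂ) + y.2 * I)‖ < R} from h)]
    rw [abs_symm_polar] at h ⊢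
    rw [_root_.abs_of_pos hp1] at h ⊢
    rw [smul_eq_mul, mul_inv_cancel₀ (ne_of_gt hp1)]
    rw [Set.indicator_of_mem (Set.mem_prod.2 ⟨Set.mem_Ioo.2 ⟨hp1, h⟩, hp2⟩)]
  · rw [if_neg (show ¬ (polarCoord.symm p : ℝ × ℝ) ∈
        {y : ℝ × ℝ | ‖((y.1 : ℂ) + y.2 * I)‖ < R} from h), smul_zero]
    exact Set.indicator_nonneg (fun _ _ => zero_le_one) _

lemma Ffun_integrable (R : ℝ) : Integrable (Ffun R) := by
  have hsmeas : MeasurableSet (polarCoord.target) :=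
    polarCoord.open_target.measurableSet
  have hderiv : ∀ p ∈ polarCoord.target,
      HasFDerivWithinAt polarCoord.symm
        (LinearMap.toContinuousLinearMap (Matrix.toLin (Module.Basis.finTwoProd ℝ) (Module.Basis.finTwoProd ℝ)
          !![Real.cos p.2, -p.1 * Real.sin p.2; Real.sin p.2, p.1 * Real.cos p.2]))
        polarCoord.target p :=
    fun p _ => (hasFDerivAt_polarCoord_symm p).hasFDerivWithinAt
  have hinj : Set.InjOn polarCoord.symm polarCoord.target := polarCoord.symm.injOn
  have himg : polarCoord.symm '' polarCoord.target = polarCoord.source :=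
    polarCoord.symm_image_target_eq_source
  have hsrc : IntegrableOn (Ffun R) polarCoord.source := by
    rw [← himg,
      integrableOn_image_iff_integrableOn_abs_det_fderiv_smul volume hsmeas hderiv hinj]
    have hdet : ∀ p : ℝ × ℝ, |(LinearMap.toContinuousLinearMap (Matrix.toLin
        (Module.Basis.finTwoProd ℝ) (Module.Basis.finTwoProd ℝ)
        !![Real.cos p.2, -p.1 * Real.sin p.2; Real.sin p.2, p.1 * Real.cos p.2])).det|
        = |p.1| := by
      intro p
      congr 1
      conv_rhs => rw [← one_mul p.1, ← Real.cos_sq_add_sin_sq p.2]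
      simp only [neg_mul, LinearMap.det_toContinuousLinearMap, LinearMap.det_toLin,
        Matrix.det_fin_two_of, sub_neg_eq_add]
      ring
    simp only [hdet]
    apply Integrable.mono' (indic_box_integrable R).restrict
    · exact (measurable_fst.abs.smul
        ((Ffun_measurable R).comp symm_polar_continuous.measurable)).aestronglyMeasurable
    · rw [ae_restrict_iff' hsmeas]
      refine ae_of_all _ fun p hp => ?_
      rw [Real.norm_eq_abs, _root_.abs_of_nonneg (by
        exact smul_nonneg (abs_nonneg _) (Ffun_nonneg R _))]
      exact polar_bound p hp R
  exact integrableOn_univ.mp (hsrc.congr_set_ae polarCoord_source_ae_eq_univ.symm)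

lemma Ffun_integral_le (R : ℝ) (hR : 0 ≤ R) : ∫ y, Ffun R y ≤ 2 * π * R := by
  rw [← integral_comp_polarCoord_symm (Ffun R)]
  have h1 : (∫ p in polarCoord.target, p.1 • Ffun R (polarCoord.symm p))
      ≤ ∫ p in polarCoord.target,
        Set.indicator (Set.Ioo (0:ℝ) R ×ˢ Set.Ioo (-π) π) (fun _ => (1:ℝ)) p := by
    apply integral_mono_of_nonneg
    · rw [Filter.EventuallyLE, ae_restrict_iff' polarCoord.open_target.measurableSet]
      refine ae_of_all _ fun p hp => ?_
      rw [polarCoord_target, Set.mem_prod, Set.mem_Ioi] at hp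
      exact smul_nonneg hp.1.le (Ffun_nonneg R _)
    · exact (indic_box_integrable R).restrict
    · rw [Filter.EventuallyLE, ae_restrict_iff' polarCoord.open_target.measurableSet]
      refine ae_of_all _ fun p hp => ?_
      have := polar_bound p hp R
      rw [polarCoord_target, Set.mem_prod, Set.mem_Ioi] at hp
      rwa [_root_.abs_of_pos hp.1] at this
  refine h1.trans ?_
  refine (setIntegral_le_integral (indic_box_integrable R)
    (ae_of_all _ fun p => Set.indicator_nonneg (fun _ _ => zero_le_one) p)).trans ?_
  rw [integral_indicator (measurableSet_Ioo.prod measurableSet_Ioo), setIntegral_const,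
    smul_eq_mul, mul_one, Measure.volume_eq_prod, measureReal_def, Measure.prod_prod, Real.volume_Ioo,
    Real.volume_Ioo, ← ENNReal.ofReal_mul (by linarith)]
  rw [ENNReal.toReal_ofReal (by have := Real.pi_pos; nlinarith)]
  have hpi := Real.pi_pos
  nlinarith [Real.pi_pos]



lemma geom_lemma {n : ℕ} (γ₁ γ₂ x : EuclideanSpace ℝ (Fin n))
    (h1 : ‖γ₁‖ = 1) (h2 : ‖γ₂‖ = 1) (h12 : (inner ℝ γ₁ γ₂ : ℝ) = 0) (y₁ y₂ : ℝ) :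
    ‖x - y₁ • γ₁ - y₂ • γ₂‖ ^ 2 =
      ‖x - ((inner ℝ x γ₁ : ℝ) • γ₁ + (inner ℝ x γ₂ : ℝ) • γ₂)‖ ^ 2 +
        (((inner ℝ x γ₁ : ℝ) - y₁) ^ 2 + ((inner ℝ x γ₂ : ℝ) - y₂) ^ 2) := by
  have g11 : (inner ℝ γ₁ γ₁ : ℝ) = 1 := by
    rw [real_inner_self_eq_norm_sq, h1]; norm_num
  have g22 : (inner ℝ γ₂ γ₂ : ℝ) = 1 := by
    rw [real_inner_self_eq_norm_sq, h2]; norm_num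
  rw [← real_inner_self_eq_norm_sq, ← real_inner_self_eq_norm_sq]
  simp only [inner_sub_left, inner_sub_right, inner_add_left, inner_add_right,
    real_inner_smul_left, real_inner_smul_right]
  have h21 : (inner ℝ γ₂ γ₁ : ℝ) = 0 := by rw [real_inner_comm]; exact h12
  rw [real_inner_comm γ₁ x, real_inner_comm γ₂ x]
  simp only [g11, g22, h21, h12]
  ring

lemma norm_xT {n : ℕ} (γ₁ γ₂ : EuclideanSpace ℝ (Fin n)) (a b : ℝ)
    (h1 : ‖γ₁‖ = 1) (h2 : ‖γ₂‖ = 1) (h12 : (inner ℝ γ₁ γ₂ : ℝ) = 0) :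
    ‖a • γ₁ + b • γ₂‖ ^ 2 = a ^ 2 + b ^ 2 := by
  have g11 : (inner ℝ γ₁ γ₁ : ℝ) = 1 := by
    rw [real_inner_self_eq_norm_sq, h1]; norm_num
  have g22 : (inner ℝ γ₂ γ₂ : ℝ) = 1 := by
    rw [real_inner_self_eq_norm_sq, h2]; norm_num
  rw [← real_inner_self_eq_norm_sq]
  simp only [inner_add_left, inner_add_right, real_inner_smul_left, real_inner_smul_right]
  have h21 : (inner ℝ γ₂ γ₁ : ℝ) = 0 := by rw [real_inner_comm]; exact h12
  simp only [g11, g22, h21, h12]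
  ring

noncomputable def cauchySol (n : ℕ) (γ₁ γ₂ : EuclideanSpace ℝ (Fin n))
    (f : EuclideanSpace ℝ (Fin n) → ℂ) (x : EuclideanSpace ℝ (Fin n)) : ℂ :=
  (1 / (2 * Real.pi) : ℂ) *
    ∫ y : ℝ × ℝ, ((y.1 : ℂ) + y.2 * I)⁻¹ * f (x - y.1 • γ₁ - y.2 • γ₂)

set_option maxHeartbeats 2000000 in
theorem stmt1 (n : ℕ) (hn : 1 ≤ n) (M : ℝ) (hM : 0 < M) :
    ∃ C : ℝ, 0 < C ∧ ∀ (f : EuclideanSpace ℝ (Fin n) → ℂ), Measurable f →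
      ∀ K : ℝ, (∀ x, ‖f x‖ ≤ K) → (∀ x, M ≤ ‖x‖ → f x = 0) →
      ∀ (γ₁ γ₂ : EuclideanSpace ℝ (Fin n)),
        ‖γ₁‖ = 1 → ‖γ₂‖ = 1 → (inner ℝ γ₁ γ₂ : ℝ) = 0 →
      ∀ x : EuclideanSpace ℝ (Fin n),
        ‖cauchySol n γ₁ γ₂ f x‖ ≤
          C * K * (1 + ‖(inner ℝ x γ₁ : ℝ) • γ₁ + (inner ℝ x γ₂ : ℝ) • γ₂‖ ^ 2) ^ (-(1:ℝ)/2) *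
            Set.indicator (Metric.ball (0 : EuclideanSpace ℝ (Fin n)) M) (fun _ => (1:ℝ))
              (x - ((inner ℝ x γ₁ : ℝ) • γ₁ + (inner ℝ x γ₂ : ℝ) • γ₂)) := by
  refine ⟨3*M*(1+2*M) + 2*M*(1+2*M) + 1, by positivity, ?_⟩
  intro f hf K hK hsupp γ₁ γ₂ h1 h2 h12 x
  set C : ℝ := 3*M*(1+2*M) + 2*M*(1+2*M) + 1 with hC
  have hCpos : 0 < C := by positivity
  set a : ℝ := (inner ℝ x γ₁ : ℝ) with ha
  set b : ℝ := (inner ℝ x γ₂ : ℝ) with hb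
  set xT : EuclideanSpace ℝ (Fin n) := a • γ₁ + b • γ₂ with hxT
  have hK0 : 0 ≤ K := le_trans (norm_nonneg _) (hK 0)
  have hpi := Real.pi_pos
  set z : ℂ := (a : ℂ) + b * I with hz
  set G : ℝ × ℝ → ℂ := fun y => ((y.1 : ℂ) + y.2 * I)⁻¹ * f (x - y.1 • γ₁ - y.2 • γ₂) with hG
  have hcs : cauchySol n γ₁ γ₂ f x = (1 / (2 * Real.pi) : ℂ) * ∫ y : ℝ × ℝ, G y := rfl
  have hsub : ∀ y : ℝ × ℝ, ‖(((y.1 : ℂ) + y.2 * I) - z)‖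
      = Real.sqrt ((y.1 - a) ^ 2 + (y.2 - b) ^ 2) := by
    intro y
    rw [show ((y.1 : ℂ) + y.2 * I) - z = ((y.1 - a : ℝ) : ℂ) + ((y.2 - b : ℝ)) * I by
      rw [hz]; push_cast; ring]
    exact Complex.norm_add_mul_I _ _
  -- support estimate
  have hsup : ∀ y : ℝ × ℝ, f (x - y.1 • γ₁ - y.2 • γ₂) ≠ 0 →
      ‖(((y.1 : ℂ) + y.2 * I) - z)‖ < M := by
    intro y hy
    by_contra hcon
    push_neg at hcon
    rw [hsub y] at hcon
    have hS : M ^ 2 ≤ (y.1 - a) ^ 2 + (y.2 - b) ^ 2 := by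
      have := Real.sq_sqrt (by positivity : (0:ℝ) ≤ (y.1 - a) ^ 2 + (y.2 - b) ^ 2)
      nlinarith [Real.sqrt_nonneg ((y.1 - a) ^ 2 + (y.2 - b) ^ 2)]
    have hgeom := geom_lemma γ₁ γ₂ x h1 h2 h12 y.1 y.2
    apply hy
    apply hsupp
    nlinarith [norm_nonneg (x - y.1 • γ₁ - y.2 • γ₂), sq_nonneg (a - y.1), sq_nonneg (b - y.2),
      sq_nonneg (‖x - xT‖)]
  have hGnorm : ∀ y : ℝ × ℝ, ‖G y‖
      = (‖((y.1 : ℂ) + y.2 * I)‖)⁻¹ * ‖f (x - y.1 • γ₁ - y.2 • γ₂)‖ := by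
    intro y
    rw [hG]
    simp only [norm_mul, norm_inv]
  have hcoef : ‖(1 / (2 * (Real.pi : ℂ)) : ℂ)‖ = 1 / (2 * Real.pi) := by
    rw [show (1 / (2 * (Real.pi : ℂ)) : ℂ) = ((1 / (2 * Real.pi) : ℝ) : ℂ) by push_cast; ring]
    rw [Complex.norm_real, Real.norm_eq_abs, abs_of_pos (by positivity)]
  set t : ℝ := ‖xT‖ with htdef
  have ht2 : t ^ 2 = a ^ 2 + b ^ 2 := norm_xT γ₁ γ₂ a b h1 h2 h12
  have ht0 : 0 ≤ t := norm_nonneg _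
  have habsz : ‖z‖ = Real.sqrt (a ^ 2 + b ^ 2) := Complex.norm_add_mul_I a b
  have habsz' : ‖z‖ = t := by
    rw [habsz, ← ht2, Real.sqrt_sq ht0]
  have hrpow : (1 + t ^ 2 : ℝ) ^ (-(1:ℝ)/2) = (Real.sqrt (1 + t ^ 2))⁻¹ := by
    rw [show (-(1:ℝ)/2) = -(1/2) by ring, Real.rpow_neg (by positivity), Real.sqrt_eq_rpow]
  have hsqrt_pos : 0 < Real.sqrt (1 + t ^ 2) := Real.sqrt_pos.mpr (by positivity)
  have hsqrt_le : Real.sqrt (1 + t ^ 2) ≤ 1 + t := by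
    rw [show (1:ℝ) + t = Real.sqrt ((1+t)^2) by rw [Real.sqrt_sq (by positivity)]]
    apply Real.sqrt_le_sqrt
    nlinarith
  by_cases hin : x - xT ∈ Metric.ball (0 : EuclideanSpace ℝ (Fin n)) M
  · -- main case
    rw [Set.indicator_of_mem hin, mul_one]
    have key : ‖∫ y : ℝ × ℝ, G y‖ ≤ 2 * Real.pi * C * K * (Real.sqrt (1 + t ^ 2))⁻¹ := by
      by_cases hr : t ≤ 2 * M
      · -- near case
        have hbound : ∀ y : ℝ × ℝ, ‖G y‖ ≤ K * Ffun (3 * M) y := by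
          intro y
          by_cases hy : f (x - y.1 • γ₁ - y.2 • γ₂) = 0
          · rw [hGnorm, hy, norm_zero, mul_zero]
            exact mul_nonneg hK0 (Ffun_nonneg _ _)
          · have hwz := hsup y hy
            have habsw : ‖((y.1 : ℂ) + y.2 * I)‖ < 3 * M := by
              calc ‖((y.1 : ℂ) + y.2 * I)‖
                  = ‖(z + (((y.1 : ℂ) + y.2 * I) - z))‖ := by ring_nf
                _ ≤ ‖z‖ + ‖(((y.1 : ℂ) + y.2 * I) - z)‖ :=
                    norm_add_le _ _
                _ < t + M := by rw [habsz']; linarith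
                _ ≤ 3 * M := by linarith
            rw [hGnorm]
            have hFy : Ffun (3 * M) y = (‖((y.1 : ℂ) + y.2 * I)‖)⁻¹ := by
              unfold Ffun
              rw [Set.indicator_apply, if_pos (show y ∈
                {y : ℝ × ℝ | ‖((y.1 : ℂ) + y.2 * I)‖ < 3 * M} from habsw)]
            rw [hFy, mul_comm K _]
            exact mul_le_mul_of_nonneg_left (hK _) (by positivity)
        calc ‖∫ y : ℝ × ℝ, G y‖ ≤ ∫ y : ℝ × ℝ, K * Ffun (3 * M) y :=
              norm_integral_le_of_norm_le ((Ffun_integrable (3 * M)).const_mul K)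
                (ae_of_all _ hbound)
          _ = K * ∫ y : ℝ × ℝ, Ffun (3 * M) y := integral_const_mul K _
          _ ≤ K * (2 * π * (3 * M)) := by
              apply mul_le_mul_of_nonneg_left (Ffun_integral_le (3*M) (by positivity)) hK0
          _ ≤ 2 * Real.pi * C * K * (Real.sqrt (1 + t ^ 2))⁻¹ := by
              have h3M : 3 * M * Real.sqrt (1 + t ^ 2) ≤ C := by
                calc 3 * M * Real.sqrt (1 + t ^ 2) ≤ 3 * M * (1 + t) := by
                      apply mul_le_mul_of_nonneg_left hsqrt_le (by positivity)
                  _ ≤ 3 * M * (1 + 2 * M) := by nlinarith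
                  _ ≤ C := by rw [hC]; nlinarith
              have hCs : 3 * M ≤ C * (Real.sqrt (1 + t ^ 2))⁻¹ := by
                rw [← div_eq_mul_inv, le_div_iff₀ hsqrt_pos]
                exact h3M
              calc K * (2 * π * (3 * M)) = 2 * π * K * (3 * M) := by ring
                _ ≤ 2 * π * K * (C * (Real.sqrt (1 + t ^ 2))⁻¹) :=
                    mul_le_mul_of_nonneg_left hCs (by positivity)
                _ = 2 * Real.pi * C * K * (Real.sqrt (1 + t ^ 2))⁻¹ := by ring
      · -- far case
        push_neg at hr
        set c : ℝ × ℝ := (a, b) with hc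
        have hrpos : 0 < t := lt_trans (by positivity) hr
        have hbound : ∀ y : ℝ × ℝ, ‖G y‖ ≤
            Set.indicator (Metric.ball c M) (fun _ => K * (2 / t)) y := by
          intro y
          by_cases hy : f (x - y.1 • γ₁ - y.2 • γ₂) = 0
          · rw [hGnorm, hy, norm_zero, mul_zero]
            apply Set.indicator_nonneg
            intro y _
            positivity
          · have hwz := hsup y hy
            have hmem : y ∈ Metric.ball c M := by
              rw [Metric.mem_ball, Prod.dist_eq]
              rw [hsub y] at hwz
              have h1' : dist y.1 c.1 < M := by
                rw [Real.dist_eq]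
                have : |y.1 - a| ≤ Real.sqrt ((y.1 - a) ^ 2 + (y.2 - b) ^ 2) := by
                  rw [show |y.1 - a| = Real.sqrt ((y.1 - a)^2) by rw [Real.sqrt_sq_eq_abs]]
                  exact Real.sqrt_le_sqrt (by nlinarith)
                simp only [hc]
                linarith
              have h2' : dist y.2 c.2 < M := by
                rw [Real.dist_eq]
                have : |y.2 - b| ≤ Real.sqrt ((y.1 - a) ^ 2 + (y.2 - b) ^ 2) := by
                  rw [show |y.2 - b| = Real.sqrt ((y.2 - b)^2) by rw [Real.sqrt_sq_eq_abs]]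
                  exact Real.sqrt_le_sqrt (by nlinarith)
                simp only [hc]
                linarith
              exact max_lt h1' h2'
            have habsw : t / 2 < ‖((y.1 : ℂ) + y.2 * I)‖ := by
              have h3 := norm_sub_norm_le z ((y.1 : ℂ) + y.2 * I)
              rw [norm_sub_rev] at h3
              rw [habsz'] at h3
              linarith
            rw [hGnorm, Set.indicator_of_mem hmem]
            have hinv : (‖((y.1 : ℂ) + y.2 * I)‖)⁻¹ ≤ (t / 2)⁻¹ := by
              apply inv_anti₀ (by positivity) habsw.le
            calc (‖((y.1 : ℂ) + y.2 * I)‖)⁻¹ * ‖f (x - y.1 • γ₁ - y.2 • γ₂)‖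
                ≤ (t / 2)⁻¹ * K := mul_le_mul hinv (hK _) (norm_nonneg _) (by positivity)
              _ = K * (2 / t) := by rw [inv_div]; ring
        have hgint : Integrable (Set.indicator (Metric.ball c M) (fun _ => K * (2 / t))) := by
          rw [integrable_indicator_iff Metric.isOpen_ball.measurableSet]
          exact integrableOn_const measure_ball_lt_top.ne
        have hvol : (volume (Metric.ball c M)).toReal = 2 * M * (2 * M) := by
          rw [show Metric.ball c M = Metric.ball a M ×ˢ Metric.ball b M from
              (ball_prod_same a b M).symm, Measure.volume_eq_prod, Measure.prod_prod,
            Real.volume_ball, Real.volume_ball, ← ENNReal.ofReal_mul (by positivity),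
            ENNReal.toReal_ofReal (by positivity)]
        have hs_le : Real.sqrt (1 + t ^ 2) ≤ t * (1 + 2 * M) / (2 * M) := by
          refine hsqrt_le.trans ?_
          rw [le_div_iff₀ (by positivity)]
          nlinarith
        have hinv_ge : 2 * M / (t * (1 + 2 * M)) ≤ (Real.sqrt (1 + t ^ 2))⁻¹ := by
          have h4 := inv_anti₀ hsqrt_pos hs_le
          rwa [inv_div] at h4
        have hpi3 : (3:ℝ) < π := Real.pi_gt_three
        calc ‖∫ y : ℝ × ℝ, G y‖
            ≤ ∫ y : ℝ × ℝ, Set.indicator (Metric.ball c M) (fun _ => K * (2 / t)) y :=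
              norm_integral_le_of_norm_le hgint (ae_of_all _ hbound)
          _ = K * (2 / t) * (volume (Metric.ball c M)).toReal := by
              rw [integral_indicator Metric.isOpen_ball.measurableSet, setIntegral_const,
                smul_eq_mul, mul_comm, measureReal_def]
          _ = K * (2 / t) * (2 * M * (2 * M)) := by rw [hvol]
          _ ≤ 2 * π * C * K * (2 * M / (t * (1 + 2 * M))) := by
              rw [show K * (2 / t) * (2 * M * (2 * M)) = 8 * M ^ 2 * K / t by ring,
                show 2 * π * C * K * (2 * M / (t * (1 + 2 * M)))
                  = 4 * π * C * K * M / (t * (1 + 2 * M)) by ring,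
                div_le_div_iff₀ (by positivity) (by positivity)]
              have hCge : 2 * M * (1 + 2 * M) ≤ C := by rw [hC]; nlinarith
              have hpiC : 2 * M * (1 + 2 * M) ≤ π * C :=
                hCge.trans (by nlinarith)
              nlinarith [mul_nonneg (mul_nonneg hK0 ht0) ht0,
                mul_le_mul_of_nonneg_left hpiC (mul_nonneg hK0 hrpos.le),
                mul_pos hrpos hrpos]
          _ ≤ 2 * π * C * K * (Real.sqrt (1 + t ^ 2))⁻¹ :=
              mul_le_mul_of_nonneg_left hinv_ge (by positivity)
    -- conclude main case
    rw [hcs, norm_mul, hcoef, hrpow]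
    calc 1 / (2 * π) * ‖∫ y : ℝ × ℝ, G y‖
        ≤ 1 / (2 * π) * (2 * π * C * K * (Real.sqrt (1 + t ^ 2))⁻¹) :=
          mul_le_mul_of_nonneg_left key (by positivity)
      _ = C * K * (Real.sqrt (1 + t ^ 2))⁻¹ := by
          have hπ : (π:ℝ) ≠ 0 := hpi.ne'
          field_simp
  · -- zero case
    rw [Set.indicator_of_notMem hin, mul_zero]
    have hP : M ≤ ‖x - xT‖ := by
      rw [Metric.mem_ball, dist_zero_right] at hin
      linarith [not_lt.mp hin]
    have hzero : ∀ y : ℝ × ℝ, f (x - y.1 • γ₁ - y.2 • γ₂) = 0 := by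
      intro y
      apply hsupp
      have hgeom := geom_lemma γ₁ γ₂ x h1 h2 h12 y.1 y.2
      nlinarith [norm_nonneg (x - y.1 • γ₁ - y.2 • γ₂), sq_nonneg (a - y.1), sq_nonneg (b - y.2)]
    rw [hcs, show (∫ y : ℝ × ℝ, G y) = 0 by
      rw [show G = fun _ => (0:ℂ) from funext fun y => by rw [hG]; simp [hzero y]]
      exact integral_zero _ _]
    simp
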